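/- Every central extension of NF_n by a k-dimensional abelian algebra V (with V the center of the extension) is isomorphic as an algebra either to NF_n ⊕ C^k or to NF_{n+1} ⊕ C^{k-1}, and these two algebras are not isomorphic. -/

import Mathlib

/-- Multiplication of the null-filiform Leibniz algebra `NF_n`. -/
def NFmul (n : ℕ) (x y : Fin n → ℂ) : Fin n → ℂ :=
  fun k =>
    if 1 ≤ (k : ℕ) then
      x ⟨(k : ℕ) - 1, Nat.lt_of_le_of_lt (Nat.sub_le _ _) k.isLt⟩ *
        y ⟨0, Nat.lt_of_le_of_lt (Nat.zero_le _) k.isLt⟩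
    else 0

/-- The central extension `L_θ = NF_n ⊕ V` with bracket
`[x+u, y+v] = [x,y] + θ(x,y)`. -/
def extMul (n k : ℕ) (θ : (Fin n → ℂ) → (Fin n → ℂ) → (Fin k → ℂ))
    (a b : (Fin n → ℂ) × (Fin k → ℂ)) : (Fin n → ℂ) × (Fin k → ℂ) :=
  (NFmul n a.1 b.1, θ a.1 b.1)

/-- The split algebra `NF_m ⊕ ℂ^j` (zero products with the abelian part). -/
def splitMul (m j : ℕ) (a b : (Fin m → ℂ) × (Fin j → ℂ)) :
    (Fin m → ℂ) × (Fin j → ℂ) :=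
  (NFmul m a.1 b.1, 0)


def Ev (m i : ℕ) : Fin m → ℂ := fun j => if (j : ℕ) = i then 1 else 0


theorem NFmul_smul (n : ℕ) (hn : 0 < n) (x y : Fin n → ℂ) :
    NFmul n x y = y ⟨0, hn⟩ • NFmul n x (Ev n 0) := by
  funext j
  simp only [NFmul, Ev, Pi.smul_apply, smul_eq_mul, if_true]
  by_cases h1 : 1 ≤ (j : ℕ)
  · rw [if_pos h1, if_pos h1]
    ring
  · rw [if_neg h1, if_neg h1, mul_zero]

theorem decomp (n : ℕ) (hn : 0 < n) (y : Fin n → ℂ) :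
    y = y ⟨0, hn⟩ • Ev n 0
      + NFmul n (fun i => if h : (i : ℕ) + 1 < n then y ⟨(i : ℕ) + 1, h⟩ else 0) (Ev n 0) := by
  funext j
  simp only [Pi.add_apply, Pi.smul_apply, smul_eq_mul, NFmul, Ev, if_true]
  by_cases h1 : 1 ≤ (j : ℕ)
  · rw [if_neg (show ¬((j : ℕ) = 0) by omega), if_pos h1,
      dif_pos (show (j : ℕ) - 1 + 1 < n by have := j.isLt; omega)]
    rw [mul_zero, mul_one, zero_add]
    refine congrArg y (Fin.ext ?_)
    show (j : ℕ) = (j : ℕ) - 1 + 1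
    omega
  · rw [if_pos (show (j : ℕ) = 0 by omega), if_neg h1]
    rw [mul_one, add_zero]
    refine congrArg y (Fin.ext ?_)
    show (j : ℕ) = 0
    omega

section Theta

variable {n k : ℕ} (hn : 0 < n)
  {θ : (Fin n → ℂ) →ₗ[ℂ] (Fin n → ℂ) →ₗ[ℂ] (Fin k → ℂ)}
  (hcoc : ∀ x y z : Fin n → ℂ,
      θ x (NFmul n y z) = θ (NFmul n x y) z - θ (NFmul n x z) y)

include hcoc

theorem theta_C (x : Fin n → ℂ) : θ x (NFmul n (Ev n 0) (Ev n 0)) = 0 := by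
  rw [hcoc]
  exact sub_self _

include hn

theorem theta_B (x y : Fin n → ℂ) :
    θ (NFmul n x (Ev n 0)) y = y ⟨0, hn⟩ • θ (NFmul n x (Ev n 0)) (Ev n 0) := by
  have h := hcoc x (Ev n 0) y
  rw [NFmul_smul n hn (Ev n 0) y, map_smul, theta_C hcoc, smul_zero] at h
  rw [NFmul_smul n hn x y, map_smul, LinearMap.smul_apply] at h
  exact sub_eq_zero.mp h.symm

theorem theta_A (x y : Fin n → ℂ) : θ x (NFmul n y (Ev n 0)) = 0 := by
  have h := hcoc x y (Ev n 0)
  rw [NFmul_smul n hn x y, map_smul, LinearMap.smul_apply,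
    theta_B hn hcoc x y] at h
  rw [h]
  exact sub_self _

theorem theta_key (x y : Fin n → ℂ) : θ x y = y ⟨0, hn⟩ • θ x (Ev n 0) := by
  conv_lhs => rw [decomp n hn y]
  rw [map_add, map_smul, theta_A hn hcoc, add_zero]

end Theta


noncomputable def unshL (n : ℕ) : (Fin n → ℂ) →ₗ[ℂ] (Fin n → ℂ) where
  toFun x := fun i => if h : (i : ℕ) + 1 < n then x ⟨(i : ℕ) + 1, h⟩ else 0
  map_add' x y := by funext i; by_cases h : (i : ℕ) + 1 < n <;> simp [h]
  map_smul' c x := by funext i; by_cases h : (i : ℕ) + 1 < n <;> simp [h]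

noncomputable def psiEquiv (k : ℕ) (hk : 0 < k) (v : Fin k → ℂ) (i0 : Fin k) (hc : v i0 ≠ 0) :
    (Fin k → ℂ) ≃ₗ[ℂ] (Fin k → ℂ) where
  toFun u := fun j => if j = ⟨0, hk⟩ then u i0 / v i0
      else u (Equiv.swap ⟨0, hk⟩ i0 j) - (u i0 / v i0) * v (Equiv.swap ⟨0, hk⟩ i0 j)
  invFun w := fun i => if i = i0 then v i0 * w ⟨0, hk⟩
      else w (Equiv.swap ⟨0, hk⟩ i0 i) + w ⟨0, hk⟩ * v i
  left_inv u := by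
    funext i
    dsimp only
    rcases eq_or_ne i i0 with h | h
    · rw [if_pos h, if_pos rfl, h]
      field_simp
    · rw [if_neg h, if_pos rfl]
      rcases eq_or_ne i (⟨0, hk⟩ : Fin k) with h2 | h2
      · have hne : i0 ≠ (⟨0, hk⟩ : Fin k) := fun hh => h (h2.trans hh.symm)
        rw [h2, Equiv.swap_apply_left, if_neg hne, Equiv.swap_apply_right]
        ring
      · simp only [Equiv.swap_apply_of_ne_of_ne h2 h]
        rw [if_neg h2]
        ring
  right_inv w := by
    funext j
    dsimp only
    rcases eq_or_ne j (⟨0, hk⟩ : Fin k) with h | h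
    · rw [if_pos h, if_pos rfl, h]
      field_simp
    · rw [if_neg h]
      rcases eq_or_ne j i0 with h2 | h2
      · have hne : (⟨0, hk⟩ : Fin k) ≠ i0 := fun hh => h (h2.trans hh.symm)
        rw [h2, Equiv.swap_apply_right, if_pos rfl, if_neg hne, Equiv.swap_apply_left]
        field_simp
        ring
      · simp only [Equiv.swap_apply_of_ne_of_ne h h2]
        rw [if_neg h2, if_pos trivial]
        field_simp
        ring
  map_add' u u' := by
    funext j
    by_cases h : j = (⟨0, hk⟩ : Fin k) <;> simp [h] <;> ring
  map_smul' c u := by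
    funext j
    by_cases h : j = (⟨0, hk⟩ : Fin k) <;> simp [h] <;> ring

theorem psiEquiv_v (k : ℕ) (hk : 0 < k) (v : Fin k → ℂ) (i0 : Fin k) (hc : v i0 ≠ 0) :
    psiEquiv k hk v i0 hc v = Ev k 0 := by
  funext j
  show (if j = ⟨0, hk⟩ then _ else _) = _
  by_cases h : j = (⟨0, hk⟩ : Fin k)
  · subst h
    rw [if_pos rfl]
    simp [Ev, div_self hc]
  · rw [if_neg h]
    have h0 : ((j : ℕ) = 0) = False := by
      simp only [eq_iff_iff, iff_false]
      intro hh
      exact h (Fin.ext hh)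
    rw [div_self hc]
    simp [Ev, h0]

noncomputable def shearEquiv (n k : ℕ) (ψ : (Fin k → ℂ) ≃ₗ[ℂ] (Fin k → ℂ))
    (G : (Fin n → ℂ) →ₗ[ℂ] (Fin k → ℂ)) :
    ((Fin n → ℂ) × (Fin k → ℂ)) ≃ₗ[ℂ] ((Fin n → ℂ) × (Fin k → ℂ)) where
  toFun a := (a.1, ψ (a.2 - G a.1))
  invFun b := (b.1, ψ.symm b.2 + G b.1)
  left_inv a := by simp
  right_inv b := by simp
  map_add' a b := by
    refine Prod.ext rfl ?_
    show ψ ((a.2 + b.2) - G (a.1 + b.1)) = ψ (a.2 - G a.1) + ψ (b.2 - G b.1)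
    rw [← map_add]
    congr 1
    rw [map_add]
    abel
  map_smul' c a := by
    refine Prod.ext rfl ?_
    show ψ (c • a.2 - G (c • a.1)) = c • ψ (a.2 - G a.1)
    rw [← map_smul]
    congr 1
    rw [map_smul, smul_sub]

noncomputable def FEquiv (n k : ℕ) (hn : 0 < n) (hk : 0 < k) :
    ((Fin n → ℂ) × (Fin k → ℂ)) ≃ₗ[ℂ] ((Fin (n+1) → ℂ) × (Fin (k-1) → ℂ)) where
  toFun a := (fun i => if h : (i : ℕ) < n then a.1 ⟨i, h⟩ else a.2 ⟨0, hk⟩,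
              fun j => a.2 ⟨(j : ℕ) + 1, by have := j.isLt; omega⟩)
  invFun b := (fun i => b.1 ⟨(i : ℕ), by have := i.isLt; omega⟩,
              fun j => if h : (j : ℕ) = 0 then b.1 ⟨n, n.lt_succ_self⟩
                       else b.2 ⟨(j : ℕ) - 1, by have := j.isLt; omega⟩)
  left_inv a := by
    refine Prod.ext ?_ ?_
    · funext i
      dsimp only
      rw [dif_pos i.isLt]
    · funext j
      dsimp only
      by_cases h : (j : ℕ) = 0
      · rw [dif_pos h, dif_neg (lt_irrefl n)]
        refine congrArg a.2 (Fin.ext ?_)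
        show (0 : ℕ) = (j : ℕ)
        omega
      · rw [dif_neg h]
        refine congrArg a.2 (Fin.ext ?_)
        show (j : ℕ) - 1 + 1 = (j : ℕ)
        omega
  right_inv b := by
    refine Prod.ext ?_ ?_
    · funext i
      dsimp only
      by_cases h : (i : ℕ) < n
      · rw [dif_pos h]
      · rw [dif_neg h, dif_pos rfl]
        refine congrArg b.1 (Fin.ext ?_)
        show n = (i : ℕ)
        have := i.isLt
        omega
    · funext j
      dsimp only
      rw [dif_neg (show ¬ ((j : ℕ) + 1 = 0) by omega)]
      exact congrArg b.2 (Fin.ext rfl)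
  map_add' a b := by
    refine Prod.ext ?_ rfl
    funext i
    simp only [Prod.fst_add, Prod.snd_add, Pi.add_apply]
    by_cases h : (i : ℕ) < n <;> simp [h]
  map_smul' c a := by
    refine Prod.ext ?_ rfl
    funext i
    simp only [Prod.smul_fst, Prod.smul_snd, Pi.smul_apply, RingHom.id_apply]
    by_cases h : (i : ℕ) < n <;> simp [h]

def pw {α : Type*} (mul : α → α → α) (a : α) : ℕ → α
  | 0 => a
  | i+1 => mul (pw mul a i) a

theorem pw_src_fst (n k : ℕ) (a : (Fin n → ℂ) × (Fin k → ℂ)) :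
    ∀ (i : ℕ) (j : Fin n), (j : ℕ) < i → (pw (splitMul n k) a i).1 j = 0 := by
  intro i
  induction i with
  | zero => intro j hj; omega
  | succ i ih =>
    intro j hj
    show (NFmul n _ _) j = 0
    unfold NFmul
    split
    · rename_i h1
      rw [ih _ (by simp only [Fin.val_mk]; omega)]
      ring
    · rfl

theorem pw_src (n k : ℕ) (hn : 0 < n) (a : (Fin n → ℂ) × (Fin k → ℂ)) :
    pw (splitMul n k) a n = 0 := by
  obtain ⟨m, rfl⟩ : ∃ m, n = m + 1 := ⟨n - 1, by omega⟩
  refine Prod.ext ?_ rfl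
  funext j
  exact pw_src_fst _ _ _ _ j j.isLt

theorem pw_tgt (m j : ℕ) (i : ℕ) :
    pw (splitMul m j) (Ev m 0, 0) i = (Ev m i, 0) := by
  induction i with
  | zero => rfl
  | succ i ih =>
    show splitMul m j _ _ = _
    rw [ih]
    refine Prod.ext ?_ rfl
    funext l
    show NFmul m (Ev m i) (Ev m 0) l = Ev m (i+1) l
    unfold NFmul Ev
    split_ifs with h1 h2 h3 h4 h5 <;> simp_all <;> omega

theorem noIso (n k : ℕ) (hn : 0 < n) :
    ¬ ∃ g : ((Fin n → ℂ) × (Fin k → ℂ)) ≃ₗ[ℂ] ((Fin (n+1) → ℂ) × (Fin (k-1) → ℂ)),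
        ∀ a b, g (splitMul n k a b) = splitMul (n+1) (k-1) (g a) (g b) := by
  rintro ⟨g, hg⟩
  have L3 : ∀ (a : (Fin n → ℂ) × (Fin k → ℂ)) (i : ℕ),
      g (pw (splitMul n k) a i) = pw (splitMul (n+1) (k-1)) (g a) i := by
    intro a i
    induction i with
    | zero => rfl
    | succ i ih => show g (splitMul n k _ _) = _; rw [hg, ih]; rfl
  have h1 := L3 (g.symm (Ev (n+1) 0, 0)) n
  rw [pw_src n k hn, g.apply_symm_apply, pw_tgt, map_zero] at h1
  have h2 := congrFun (congrArg Prod.fst h1) ⟨n, n.lt_succ_self⟩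
  simp [Ev] at h2


/-- Every central extension of `NF_n` by a `k`-dimensional abelian `V`
(with `V` the center of the extension) is isomorphic either to
`NF_n ⊕ ℂ^k` or to `NF_{n+1} ⊕ ℂ^{k-1}`, and these are not isomorphic. -/
theorem NF_central_extensions (n k : ℕ) (hn : 0 < n) (hk : 0 < k)
    (θ : (Fin n → ℂ) →ₗ[ℂ] (Fin n → ℂ) →ₗ[ℂ] (Fin k → ℂ))
    (hcoc : ∀ x y z : Fin n → ℂ,
      θ x (NFmul n y z) = θ (NFmul n x y) z - θ (NFmul n x z) y)
    (hcenter : ∀ z : (Fin n → ℂ) × (Fin k → ℂ),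
      (∀ w, extMul n k (fun x y => θ x y) z w = 0 ∧
            extMul n k (fun x y => θ x y) w z = 0) ↔ z.1 = 0) :
    ((∃ f : ((Fin n → ℂ) × (Fin k → ℂ)) ≃ₗ[ℂ] ((Fin n → ℂ) × (Fin k → ℂ)),
        ∀ a b, f (extMul n k (fun x y => θ x y) a b) = splitMul n k (f a) (f b)) ∨
     (∃ f : ((Fin n → ℂ) × (Fin k → ℂ)) ≃ₗ[ℂ] ((Fin (n+1) → ℂ) × (Fin (k-1) → ℂ)),
        ∀ a b, f (extMul n k (fun x y => θ x y) a b) = splitMul (n+1) (k-1) (f a) (f b))) ∧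
    ¬ ∃ g : ((Fin n → ℂ) × (Fin k → ℂ)) ≃ₗ[ℂ] ((Fin (n+1) → ℂ) × (Fin (k-1) → ℂ)),
        ∀ a b, g (splitMul n k a b) = splitMul (n+1) (k-1) (g a) (g b) := by
  have hn1 : n - 1 < n := by omega
  refine ⟨?_, noIso n k hn⟩
  right
  have hv : θ (Ev n (n-1)) (Ev n 0) ≠ 0 := by
    intro hv0
    have h0 := (hcenter (Ev n (n-1), 0)).mp ?_
    · exact absurd (congrFun h0 ⟨n-1, hn1⟩) (by simp [Ev])
    · intro w
      refine ⟨Prod.ext ?_ ?_, Prod.ext ?_ ?_⟩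
      · funext j
        show NFmul n (Ev n (n-1)) w.1 j = 0
        simp only [NFmul, Ev]
        by_cases h1 : 1 ≤ (j : ℕ)
        · rw [if_pos h1, if_neg (show ¬((j:ℕ)-1 = n-1) by have := j.isLt; omega), zero_mul]
        · rw [if_neg h1]
      · show θ (Ev n (n-1)) w.1 = 0
        rw [theta_key hn hcoc, hv0, smul_zero]
      · funext j
        show NFmul n w.1 (Ev n (n-1)) j = 0
        simp only [NFmul, Ev]
        by_cases h1 : 1 ≤ (j : ℕ)
        · rw [if_pos h1]
          by_cases hn2 : n = 1
          · exact absurd j.isLt (by omega)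
          · rw [if_neg (show ¬((0:ℕ) = n-1) by omega), mul_zero]
        · rw [if_neg h1]
      · show θ w.1 (Ev n (n-1)) = 0
        rw [theta_key hn hcoc]
        by_cases hn2 : n = 1
        · subst hn2
          have hv0' : θ (Ev 1 0) (Ev 1 0) = 0 := hv0
          have hw : w.1 = w.1 ⟨0, hn⟩ • Ev 1 0 := by
            funext j
            have hj : j = (⟨0, hn⟩ : Fin 1) := Subsingleton.elim _ _
            rw [hj]
            simp [Ev]
          calc (Ev 1 (1-1)) ⟨0,hn⟩ • θ w.1 (Ev 1 0)
              = (Ev 1 (1-1)) ⟨0,hn⟩ • θ (w.1 ⟨0,hn⟩ • Ev 1 0) (Ev 1 0) := by rw [← hw]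
            _ = 0 := by
                rw [map_smul, LinearMap.smul_apply, hv0', smul_zero, smul_zero]
        · rw [show (Ev n (n-1)) ⟨0, hn⟩ = 0 from by
            simp only [Ev]; rw [if_neg (show ¬((0:ℕ) = n-1) by omega)], zero_smul]
  obtain ⟨i0, hi0⟩ : ∃ i0 : Fin k, θ (Ev n (n-1)) (Ev n 0) i0 ≠ 0 := by
    by_contra hcon
    push_neg at hcon
    exact hv (funext fun i => hcon i)
  set ψ := psiEquiv k hk (θ (Ev n (n-1)) (Ev n 0)) i0 hi0 with hψ
  set G : (Fin n → ℂ) →ₗ[ℂ] (Fin k → ℂ) := (LinearMap.flip θ (Ev n 0)).comp (unshL n) with hGdef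
  set f := (shearEquiv n k ψ G).trans (FEquiv n k hn hk) with hfdef
  refine ⟨f, ?_⟩
  have hGapp : ∀ z : Fin n → ℂ, G z = θ (unshL n z) (Ev n 0) := fun z => rfl
  have hunsh : ∀ x y : Fin n → ℂ, unshL n (NFmul n x y)
      = y ⟨0, hn⟩ • (x - x ⟨n-1, hn1⟩ • Ev n (n-1)) := by
    intro x y
    funext i
    show (if h : (i:ℕ)+1 < n then NFmul n x y ⟨(i:ℕ)+1, h⟩ else 0) = _
    simp only [NFmul, Ev, Pi.smul_apply, Pi.sub_apply, smul_eq_mul, Fin.val_mk]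
    by_cases h : (i:ℕ)+1 < n
    · rw [dif_pos h, if_pos (show 1 ≤ (i:ℕ)+1 by omega),
        if_neg (show ¬((i:ℕ) = n-1) by omega)]
      rw [mul_zero, sub_zero]
      have hx : x ⟨(i:ℕ)+1-1, by omega⟩ = x i := congrArg x (Fin.ext rfl)
      rw [hx]
      ring
    · rw [dif_neg h, if_pos (show (i:ℕ) = n-1 by have := i.isLt; omega)]
      have hx : x ⟨n-1, hn1⟩ = x i :=
        congrArg x (Fin.ext (show n - 1 = (i:ℕ) by have := i.isLt; omega))
      rw [hx]
      ring
  have hGmul : ∀ x y : Fin n → ℂ, G (NFmul n x y)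
      = y ⟨0,hn⟩ • (θ x (Ev n 0) - x ⟨n-1, hn1⟩ • θ (Ev n (n-1)) (Ev n 0)) := by
    intro x y
    rw [hGapp, hunsh x y, map_smul, map_sub, map_smul]
    simp only [LinearMap.smul_apply, LinearMap.sub_apply]
  have hcob : ∀ x y : Fin n → ℂ,
      θ x y - G (NFmul n x y) = (y ⟨0,hn⟩ * x ⟨n-1,hn1⟩) • θ (Ev n (n-1)) (Ev n 0) := by
    intro x y
    rw [theta_key hn hcoc x y, hGmul x y, smul_sub, smul_smul, sub_sub_cancel]
  have hfeq : ∀ (z : Fin n → ℂ) (t : Fin k → ℂ),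
      f (z, t) = ((fun i : Fin (n+1) => if h : (i : ℕ) < n then z ⟨(i : ℕ), h⟩ else (ψ (t - G z)) ⟨0, hk⟩),
                  (fun j : Fin (k-1) => (ψ (t - G z)) ⟨(j : ℕ) + 1, by have := j.isLt; omega⟩)) :=
    fun z t => rfl
  intro a b
  obtain ⟨x, u⟩ := a
  obtain ⟨y, w⟩ := b
  show f (NFmul n x y, θ x y) = splitMul (n+1) (k-1) (f (x,u)) (f (y,w))
  rw [hfeq, hfeq, hfeq]
  have hpsi : ψ (θ x y - G (NFmul n x y))
      = (y ⟨0,hn⟩ * x ⟨n-1,hn1⟩) • Ev k 0 := by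
    rw [hcob x y, map_smul, hψ, psiEquiv_v]
  rw [hpsi]
  simp only [splitMul, NFmul]
  refine Prod.ext ?_ ?_
  · funext i
    dsimp only
    simp only [NFmul]
    by_cases h : (i:ℕ) < n
    · rw [dif_pos h]
      by_cases h1 : 1 ≤ (i:ℕ)
      · rw [if_pos h1, if_pos h1, dif_pos (show (i:ℕ)-1 < n by omega), dif_pos hn]
      · rw [if_neg h1, if_neg h1]
    · rw [dif_neg h]
      rw [if_pos (show 1 ≤ (i:ℕ) by have := i.isLt; omega),
        dif_pos (show (i:ℕ)-1 < n by have := i.isLt; omega), dif_pos hn]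
      simp only [Pi.smul_apply, smul_eq_mul, Ev, Fin.val_mk, if_true, mul_one]
      have hx : x ⟨(i:ℕ)-1, by have := i.isLt; omega⟩ = x ⟨n-1, hn1⟩ :=
        congrArg x (Fin.ext (show (i:ℕ) - 1 = n - 1 by have := i.isLt; omega))
      rw [hx]
      ring
  · funext j
    dsimp only
    simp only [Pi.smul_apply, smul_eq_mul, Ev, Fin.val_mk, Pi.zero_apply]
    rw [if_neg (Nat.succ_ne_zero (j:ℕ)), mul_zero]
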